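/- Let A and B be bounded self-adjoint operators on a complex Hilbert space with B nonnegative. If 0 is in the resolvent set of A + tB for every real t, then 0 is in the resolvent set of A and B A⁻¹ B = 0. -/

import Mathlib

set_option synthInstance.maxHeartbeats 1000000
set_option maxHeartbeats 1000000

open scoped InnerProductSpace

/-- If `A`, `B` are bounded self-adjoint operators on a complex Hilbert space, `B` is
nonnegative, and `0` belongs to the resolvent set of `A + t B` for every real `t`
(i.e. `A + t B` is invertible), then `A` is invertible and `B A⁻¹ B = 0`. -/
theorem stmt0 {H : Type*} [NormedAddCommGroup H] [InnerProductSpace ℂ H] [CompleteSpace H]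
    (A B : H →L[ℂ] H) (hA : IsSelfAdjoint A) (hB : B.IsPositive)
    (h : ∀ t : ℝ, IsUnit (A + (t : ℂ) • B)) :
    IsUnit A ∧ B * Ring.inverse A * B = 0 := by
  have hA0 : IsUnit A := by simpa using h 0
  refine ⟨hA0, ?_⟩
  set C := Ring.inverse A with hCdef
  have hCA : C * A = 1 := Ring.inverse_mul_cancel A hA0
  have hCsa : IsSelfAdjoint C := by
    rw [hCdef, IsSelfAdjoint, ← Ring.inverse_star, hA.star_eq]
  have hBnn : (0 : H →L[ℂ] H) ≤ B := (ContinuousLinearMap.nonneg_iff_isPositive B).2 hB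
  set K := CFC.sqrt B with hKdef
  have hKnn : (0 : H →L[ℂ] H) ≤ K := CFC.sqrt_nonneg (a := B)
  have hKsa : IsSelfAdjoint K := IsSelfAdjoint.of_nonneg hKnn
  have hK2 : K * K = B := by rw [← sq, CFC.sq_sqrt B hBnn]
  have hTsa : IsSelfAdjoint (K * C * K) := by
    rw [IsSelfAdjoint, star_mul, star_mul, hKsa.star_eq, hCsa.star_eq, mul_assoc]
  have key : spectrum ℂ (K * C * K) ⊆ {0} := by
    intro z hz
    by_contra hz0
    simp only [Set.mem_singleton_iff] at hz0
    have hzre : z = z.re := hTsa.mem_spectrum_eq_re hz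
    have hre0 : (z.re : ℝ) ≠ 0 := by
      intro h0
      exact hz0 (by rw [hzre, h0]; simp)
    -- move to spectrum of C * B
    have hz' : z ∈ spectrum ℂ (C * B) := by
      have := spectrum.nonzero_mul_comm (𝕜 := ℂ) K (C * K)
      have hmem : z ∈ spectrum ℂ (K * (C * K)) \ {0} := by
        refine ⟨by rwa [← mul_assoc], by simpa using hz0⟩
      rw [this] at hmem
      have : C * K * K = C * B := by rw [mul_assoc, hK2]
      rw [this] at hmem
      exact hmem.1
    -- but z • 1 - C * B is a unit
    have hunit : IsUnit (algebraMap ℂ (H →L[ℂ] H) z - C * B) := by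
      have h1 : IsUnit (A + ((-(z.re)⁻¹ : ℝ) : ℂ) • B) := h _
      have h2 : IsUnit (z • (A + ((-(z.re)⁻¹ : ℝ) : ℂ) • B)) := by
        rw [Algebra.smul_def]
        exact (IsUnit.map (algebraMap ℂ (H →L[ℂ] H)) (Ne.isUnit (by
          rw [hzre]; exact_mod_cast hre0))).mul h1
      have h3 : z • (A + ((-(z.re)⁻¹ : ℝ) : ℂ) • B) = z • A - B := by
        have hz1 : z * ((-(z.re)⁻¹ : ℝ) : ℂ) = -1 := by
          obtain ⟨s, hs0, rfl⟩ : ∃ s : ℝ, s ≠ 0 ∧ z = (s : ℂ) := ⟨z.re, hre0, hzre⟩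
          simp only [Complex.ofReal_re]
          push_cast
          rw [mul_neg, mul_inv_cancel₀ (Complex.ofReal_ne_zero.mpr hs0)]
        rw [smul_add, smul_smul, hz1, neg_one_smul, ← sub_eq_add_neg]
      rw [h3] at h2
      have h4 : C * (z • A - B) = algebraMap ℂ (H →L[ℂ] H) z - C * B := by
        rw [mul_sub, mul_smul_comm, hCA, Algebra.algebraMap_eq_smul_one]
      rw [← h4]
      exact (isUnit_ringInverse.mpr hA0).mul h2
    exact (spectrum.mem_iff.mp hz') hunit
  -- conclude T = 0
  have hT0 : K * C * K = 0 := by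
    have hrad : spectralRadius ℂ (K * C * K) = 0 := by
      rw [spectralRadius]
      refine le_antisymm ?_ zero_le
      refine iSup₂_le fun k hk => ?_
      have : k = 0 := key hk
      simp [this]
    have h5 := hTsa.spectralRadius_eq_nnnorm
    rw [hrad] at h5
    have h6 : ‖K * C * K‖₊ = 0 := by exact_mod_cast h5.symm
    simpa using (nnnorm_eq_zero.mp h6)
  have heq : B * C * B = K * (K * C * K) * K := by
    rw [← hK2]; simp only [mul_assoc]
  rw [heq, hT0, mul_zero, zero_mul]
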